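/- In the ring of 4×4 matrices over the Laurent polynomial ring L = F[x^{±1}, y^{±1}, z^{±1}] over a field F, the matrices A and B defined below satisfy the relations B^{-1} A² B = A^{-2} and A^{-1} B² A = B^{-2}. -/

import Mathlib

noncomputable section

/-- The Laurent polynomial ring `F[x^{±1}, y^{±1}, z^{±1}]`. -/
abbrev L (F : Type*) [Field F] := AddMonoidAlgebra F (ℤ × ℤ × ℤ)

/-- The monomial `x^i y^j z^k` in `L F`. -/
def mon (F : Type*) [Field F] (i j k : ℤ) : L F := AddMonoidAlgebra.single (i, j, k) 1

/-- The matrix `A` corresponding to the generator `a`. -/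
def A (F : Type*) [Field F] : Matrix (Fin 4) (Fin 4) (L F) :=
  !![0, 1, 0, 0;
     mon F 1 0 0, 0, 0, 0;
     0, 0, 0, mon F (-1) 1 (-1);
     0, 0, mon F 0 (-1) 1, 0]

/-- The matrix `B` corresponding to the generator `b`. -/
def B (F : Type*) [Field F] : Matrix (Fin 4) (Fin 4) (L F) :=
  !![0, 0, 1, 0;
     0, 0, 0, 1;
     mon F 0 1 0, 0, 0, 0;
     0, mon F 0 (-1) 0, 0, 0]

def A' (F : Type*) [Field F] : Matrix (Fin 4) (Fin 4) (L F) :=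
  !![0, mon F (-1) 0 0, 0, 0;
     1, 0, 0, 0;
     0, 0, 0, mon F 0 1 (-1);
     0, 0, mon F 1 (-1) 1, 0]

def B' (F : Type*) [Field F] : Matrix (Fin 4) (Fin 4) (L F) :=
  !![0, 0, mon F 0 (-1) 0, 0;
     0, 0, 0, mon F 0 1 0;
     1, 0, 0, 0;
     0, 1, 0, 0]

def AA (F : Type*) [Field F] : Matrix (Fin 4) (Fin 4) (L F) :=
  !![mon F 1 0 0, 0, 0, 0;
     0, mon F 1 0 0, 0, 0;
     0, 0, mon F (-1) 0 0, 0;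
     0, 0, 0, mon F (-1) 0 0]

def AA' (F : Type*) [Field F] : Matrix (Fin 4) (Fin 4) (L F) :=
  !![mon F (-1) 0 0, 0, 0, 0;
     0, mon F (-1) 0 0, 0, 0;
     0, 0, mon F 1 0 0, 0;
     0, 0, 0, mon F 1 0 0]

def BB (F : Type*) [Field F] : Matrix (Fin 4) (Fin 4) (L F) :=
  !![mon F 0 1 0, 0, 0, 0;
     0, mon F 0 (-1) 0, 0, 0;
     0, 0, mon F 0 1 0, 0;
     0, 0, 0, mon F 0 (-1) 0]

def BB' (F : Type*) [Field F] : Matrix (Fin 4) (Fin 4) (L F) :=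
  !![mon F 0 (-1) 0, 0, 0, 0;
     0, mon F 0 1 0, 0, 0;
     0, 0, mon F 0 (-1) 0, 0;
     0, 0, 0, mon F 0 1 0]

lemma mon_mul (F : Type*) [Field F] (i j k i' j' k' : ℤ) :
    mon F i j k * mon F i' j' k' = mon F (i+i') (j+j') (k+k') := by
  simp [mon, AddMonoidAlgebra.single_mul_single, Prod.mk_add_mk]

lemma mon_zero (F : Type*) [Field F] : mon F 0 0 0 = 1 := by
  simp [mon, AddMonoidAlgebra.one_def, Prod.mk_zero_zero]

lemma A_mul_A' (F : Type*) [Field F] : A F * A' F = 1 := by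
  ext i j
  fin_cases i <;> fin_cases j <;>
    simp [A, B, A', B', AA, AA', BB, BB', Matrix.mul_apply, Fin.sum_univ_four,
      mon_mul, mon_zero, Matrix.one_apply, Matrix.vecHead, Matrix.vecTail]

lemma B_mul_B' (F : Type*) [Field F] : B F * B' F = 1 := by
  ext i j
  fin_cases i <;> fin_cases j <;>
    simp [A, B, A', B', AA, AA', BB, BB', Matrix.mul_apply, Fin.sum_univ_four,
      mon_mul, mon_zero, Matrix.one_apply, Matrix.vecHead, Matrix.vecTail]

lemma A_sq (F : Type*) [Field F] : A F * A F = AA F := by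
  ext i j
  fin_cases i <;> fin_cases j <;>
    simp [A, B, A', B', AA, AA', BB, BB', Matrix.mul_apply, Fin.sum_univ_four,
      mon_mul, mon_zero, Matrix.one_apply, Matrix.vecHead, Matrix.vecTail]

lemma A'_sq (F : Type*) [Field F] : A' F * A' F = AA' F := by
  ext i j
  fin_cases i <;> fin_cases j <;>
    simp [A, B, A', B', AA, AA', BB, BB', Matrix.mul_apply, Fin.sum_univ_four,
      mon_mul, mon_zero, Matrix.one_apply, Matrix.vecHead, Matrix.vecTail]

lemma B_sq (F : Type*) [Field F] : B F * B F = BB F := by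
  ext i j
  fin_cases i <;> fin_cases j <;>
    simp [A, B, A', B', AA, AA', BB, BB', Matrix.mul_apply, Fin.sum_univ_four,
      mon_mul, mon_zero, Matrix.one_apply, Matrix.vecHead, Matrix.vecTail]

lemma B'_sq (F : Type*) [Field F] : B' F * B' F = BB' F := by
  ext i j
  fin_cases i <;> fin_cases j <;>
    simp [A, B, A', B', AA, AA', BB, BB', Matrix.mul_apply, Fin.sum_univ_four,
      mon_mul, mon_zero, Matrix.one_apply, Matrix.vecHead, Matrix.vecTail]

lemma swap1 (F : Type*) [Field F] : AA F * B F = B F * AA' F := by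
  ext i j
  fin_cases i <;> fin_cases j <;>
    simp [A, B, A', B', AA, AA', BB, BB', Matrix.mul_apply, Fin.sum_univ_four,
      mon_mul, mon_zero, Matrix.one_apply, Matrix.vecHead, Matrix.vecTail]

lemma swap2 (F : Type*) [Field F] : BB F * A F = A F * BB' F := by
  ext i j
  fin_cases i <;> fin_cases j <;>
    simp [A, B, A', B', AA, AA', BB, BB', Matrix.mul_apply, Fin.sum_univ_four,
      mon_mul, mon_zero, Matrix.one_apply, Matrix.vecHead, Matrix.vecTail]

lemma A_inv (F : Type*) [Field F] : (A F)⁻¹ = A' F :=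
  Matrix.inv_eq_right_inv (A_mul_A' F)

lemma B_inv (F : Type*) [Field F] : (B F)⁻¹ = B' F :=
  Matrix.inv_eq_right_inv (B_mul_B' F)

/-- `A` and `B` are invertible and satisfy `B⁻¹ A² B = A⁻²` and `A⁻¹ B² A = B⁻²`. -/
theorem A_B_satisfy_promislow_relations (F : Type*) [Field F] :
    IsUnit (A F) ∧ IsUnit (B F) ∧
    (B F)⁻¹ * (A F) ^ 2 * B F = ((A F)⁻¹) ^ 2 ∧
    (A F)⁻¹ * (B F) ^ 2 * A F = ((B F)⁻¹) ^ 2 := by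
  have hA'A : A' F * A F = 1 := mul_eq_one_comm.mp (A_mul_A' F)
  have hB'B : B' F * B F = 1 := mul_eq_one_comm.mp (B_mul_B' F)
  refine ⟨@isUnit_of_invertible _ _ _ (invertibleOfRightInverse _ _ (A_mul_A' F)),
    @isUnit_of_invertible _ _ _ (invertibleOfRightInverse _ _ (B_mul_B' F)), ?_, ?_⟩
  · rw [A_inv, B_inv, pow_two, pow_two, A_sq, A'_sq, mul_assoc, swap1,
      ← mul_assoc, hB'B, one_mul]
  · rw [A_inv, B_inv, pow_two, pow_two, B_sq, B'_sq, mul_assoc, swap2,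
      ← mul_assoc, hA'A, one_mul]
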